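/- Let a_1,...,a_m be transpositions in S_{2n+1} of the form a_i = (α_i, 2n+1). Suppose that for some index k, a_k ≠ a_i for all i ≠ k. Let σ_1 = a_1⋯a_{k-1} and σ_2 = a_{k+1}⋯a_m. Then |σ_1 a_k σ_2| = |σ_1 σ_2| + 1, where |σ| denotes the minimal number of transpositions needed to write σ as a product. -/

import Mathlib

namespace JM

/-- A collection of sets is a partition of `Fin m`. -/
def IsPartitionOn {m : ℕ} (π : Set (Set (Fin m))) : Prop :=
  (∀ B ∈ π, B.Nonempty) ∧ (∀ x : Fin m, ∃ B ∈ π, x ∈ B) ∧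
  (∀ B ∈ π, ∀ B' ∈ π, (B ∩ B').Nonempty → B = B')

/-- The partition is non-crossing. -/
def Noncrossing {m : ℕ} (π : Set (Set (Fin m))) : Prop :=
  ∀ B ∈ π, ∀ B' ∈ π, B ≠ B' →
    ¬ ∃ k1 l1 k2 l2 : Fin m, k1 < l1 ∧ l1 < k2 ∧ k2 < l2 ∧
      k1 ∈ B ∧ k2 ∈ B ∧ l1 ∈ B' ∧ l2 ∈ B'

/-- `B` is an inner block of `B'`. -/
def Inner {m : ℕ} (B B' : Set (Fin m)) : Prop :=
  (∃ p ∈ B', ∀ b ∈ B, p < b) ∧ (∃ q ∈ B', ∀ b ∈ B, b < q)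

/-- `B` is a direct inner block of `B''` in π. -/
def DirectInner {m : ℕ} (π : Set (Set (Fin m))) (B B'' : Set (Fin m)) : Prop :=
  Inner B B'' ∧ ¬ ∃ B' ∈ π, Inner B B' ∧ Inner B' B''

/-- Non-crossing partitions with blocks of size 1 or 2, each singleton inner to a 2-block. -/
def NC1lt2 (m : ℕ) : Set (Set (Set (Fin m))) :=
  {π | IsPartitionOn π ∧ Noncrossing π ∧ (∀ B ∈ π, B.ncard = 1 ∨ B.ncard = 2) ∧
    ∀ B ∈ π, B.ncard = 1 → ∃ B' ∈ π, B'.ncard = 2 ∧ Inner B B'}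

/-- Non-crossing partitions all of whose blocks have size at least two. -/
def NCge2 (m : ℕ) : Set (Set (Set (Fin m))) :=
  {π | IsPartitionOn π ∧ Noncrossing π ∧ ∀ B ∈ π, 2 ≤ B.ncard}

/-- The merging map `F`: each 2-block is merged with its direct inner singletons. -/
def Fmap {m : ℕ} (π : Set (Set (Fin m))) : Set (Set (Fin m)) :=
  {C | ∃ B ∈ π, B.ncard = 2 ∧
    C = B ∪ {x | ∃ S ∈ π, S = {x} ∧ DirectInner π S B}}

/-- The splitting map `G`: from each block of size at least 3, every element except the
minimum and the maximum is placed in its own singleton block. -/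
def Gmap {m : ℕ} (π : Set (Set (Fin m))) : Set (Set (Fin m)) :=
  {C | (∃ B ∈ π, B.ncard ≤ 2 ∧ C = B) ∨
    (∃ B ∈ π, 3 ≤ B.ncard ∧ ∃ x ∈ B, (∃ y ∈ B, y < x) ∧ (∃ z ∈ B, x < z) ∧ C = {x}) ∨
    (∃ B ∈ π, 3 ≤ B.ncard ∧ ∃ y ∈ B, ∃ z ∈ B,
      (∀ b ∈ B, y ≤ b) ∧ (∀ b ∈ B, b ≤ z) ∧ C = {y, z})}

/-- Minimal number of transpositions needed to write σ as a product. -/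
noncomputable def permLength {β : Type*} [DecidableEq β] [Fintype β] (σ : Equiv.Perm β) : ℕ :=
  sInf {k | ∃ l : List (Equiv.Perm β), l.length = k ∧ (∀ t ∈ l, t.IsSwap) ∧ l.prod = σ}

/-- The element 2n+1 of {1,…,2n+1}. -/
def jmTop (n : ℕ) : Fin (2*n+1) := Fin.last (2*n)

/-- The tuple of Jucys-Murphy transpositions (αᵢ, 2n+1). -/
def jmTuple {n m : ℕ} (α : Fin m → Fin (2*n+1)) : Fin m → Equiv.Perm (Fin (2*n+1)) :=
  fun i => Equiv.swap (α i) (jmTop n)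

/-- The partition of indices grouping equal values of α. -/
def eqPartition {m : ℕ} {β : Type*} (α : Fin m → β) : Set (Set (Fin m)) :=
  {B | ∃ j : Fin m, B = {i | α i = α j}}

/-- A partition respects a two-coloring. -/
def Respects {m : ℕ} (π : Set (Set (Fin m))) (c : Fin m → Bool) : Prop :=
  ∀ B ∈ π, ∀ i ∈ B, ∀ j ∈ B, c i = c j

/-- Membership in the subgroup S_n × S_n × {e} of S_{2n+1}. -/
def InH (n : ℕ) (σ : Equiv.Perm (Fin (2*n+1))) : Prop :=
  (∀ x : Fin (2*n+1), (x:ℕ) < n → ((σ x : Fin (2*n+1)) : ℕ) < n) ∧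
  (∀ x : Fin (2*n+1), n ≤ (x:ℕ) → (x:ℕ) < 2*n →
    n ≤ ((σ x : Fin (2*n+1)) : ℕ) ∧ ((σ x : Fin (2*n+1)) : ℕ) < 2*n) ∧
  σ (jmTop n) = jmTop n

def e1 (n : ℕ) : Fin n ≃ {x : Fin (2*n+1) // (x:ℕ) < n} where
  toFun i := ⟨⟨i, by omega⟩, i.isLt⟩
  invFun x := ⟨(x.1 : ℕ), x.2⟩
  left_inv i := rfl
  right_inv x := rfl

def e2 (n : ℕ) : Fin n ≃ {x : Fin (2*n+1) // n ≤ (x:ℕ) ∧ (x:ℕ) < 2*n} where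
  toFun i := ⟨⟨n + i, by omega⟩, by simp only [Fin.val_mk]; omega⟩
  invFun x := ⟨(x.1 : ℕ) - n, by have := x.2; omega⟩
  left_inv i := by ext; simp
  right_inv x := by
    rcases x with ⟨x, hx⟩
    exact Subtype.ext (Fin.ext (by simp; omega))

/-- Embed a permutation of `Fin n` as a permutation of `Fin (2n+1)` acting on {1,…,n}. -/
def lift1 {n : ℕ} (τ : Equiv.Perm (Fin n)) : Equiv.Perm (Fin (2*n+1)) :=
  τ.extendDomain (e1 n)

/-- Embed a permutation of `Fin n` as a permutation of `Fin (2n+1)` acting on {n+1,…,2n}. -/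
def lift2 {n : ℕ} (τ : Equiv.Perm (Fin n)) : Equiv.Perm (Fin (2*n+1)) :=
  τ.extendDomain (e2 n)

section Aux2
set_option linter.unusedSectionVars false
variable {β : Type*} [DecidableEq β] [Fintype β]

lemma permSet_nonempty (σ : Equiv.Perm β) :
    {k | ∃ l : List (Equiv.Perm β), l.length = k ∧ (∀ t ∈ l, t.IsSwap) ∧ l.prod = σ}.Nonempty := by
  obtain ⟨l, hl1, hl2⟩ := (Equiv.Perm.truncSwapFactors σ).out
  exact ⟨l.length, l, rfl, hl2, hl1⟩

lemma permLength_mem (σ : Equiv.Perm β) :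
    ∃ l : List (Equiv.Perm β), l.length = permLength σ ∧ (∀ t ∈ l, t.IsSwap) ∧ l.prod = σ :=
  Nat.sInf_mem (permSet_nonempty σ)

lemma permLength_le {σ : Equiv.Perm β} {l : List (Equiv.Perm β)}
    (h1 : ∀ t ∈ l, t.IsSwap) (h2 : l.prod = σ) : permLength σ ≤ l.length :=
  Nat.sInf_le ⟨l, rfl, h1, h2⟩

lemma isSwap_moving {s : Equiv.Perm β} (hs : s.IsSwap) {x : β} (hx : s x ≠ x) :
    ∃ a, a ≠ x ∧ s = Equiv.swap x a := by
  obtain ⟨u, v, huv, rfl⟩ := hs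
  by_cases hxu : x = u
  · exact ⟨v, fun h => huv (hxu.symm.trans h.symm) |>.elim, by rw [hxu]⟩
  by_cases hxv : x = v
  · exact ⟨u, fun h => huv (h.trans hxv) |>.elim, by rw [hxv, Equiv.swap_comm]⟩
  · exact absurd (Equiv.swap_apply_of_ne_of_ne hxu hxv) hx

lemma swap_id3 {x a b : β} (hxa : x ≠ a) (hxb : x ≠ b) (hab : a ≠ b) :
    Equiv.swap x a * Equiv.swap x b = Equiv.swap a b * Equiv.swap x a := by
  ext w
  simp only [Equiv.Perm.mul_apply, Equiv.swap_apply_def]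
  split_ifs <;> simp_all

lemma deletion (x : β) (N : ℕ) : ∀ (l : List (Equiv.Perm β)), l.length = N →
    (∀ t ∈ l, Equiv.Perm.IsSwap t) → l.prod x = x → (∃ s ∈ l, s x ≠ x) →
    ∃ l' : List (Equiv.Perm β), l'.length + 2 = l.length ∧
      (∀ t ∈ l', Equiv.Perm.IsSwap t) ∧ l'.prod = l.prod := by
  induction N using Nat.strong_induction_on with
  | _ N ih =>
  rintro l hlen hsw hfix ⟨s0, hs0mem, hs0x⟩
  rcases l with _ | ⟨s, tail⟩
  · exact absurd hs0mem List.not_mem_nil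
  by_cases hsx : s x = x
  · -- head fixes x, recurse into tail
    have hs0tail : s0 ∈ tail := by
      rcases List.mem_cons.1 hs0mem with h | h
      · exact absurd (h ▸ hsx) hs0x
      · exact h
    have htfix : tail.prod x = x := by
      have h1 : s (tail.prod x) = x := by simpa [List.prod_cons] using hfix
      have h2 : s (tail.prod x) = s x := by rw [h1, hsx]
      exact s.injective h2
    obtain ⟨l'', h1, h2, h3⟩ := ih tail.length (by simp [← hlen]) tail rfl
      (fun t ht => hsw t (List.mem_cons_of_mem _ ht)) htfix ⟨s0, hs0tail, hs0x⟩
    exact ⟨s :: l'', by simp [← h1], fun t ht => by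
      rcases List.mem_cons.1 ht with h | h
      · exact h ▸ hsw s (List.mem_cons_self)
      · exact h2 t h, by simp [List.prod_cons, h3]⟩
  · -- head moves x
    obtain ⟨a, hax, rfl⟩ := isSwap_moving (hsw s (List.mem_cons_self)) hsx
    rcases tail with _ | ⟨s₂, rest⟩
    · simp [Equiv.swap_apply_left] at hfix
      exact (hax hfix).elim
    by_cases h2 : s₂ = Equiv.swap x a
    · refine ⟨rest, by simp, fun t ht => hsw t (by simp [ht]), ?_⟩
      simp [List.prod_cons, h2, ← mul_assoc, Equiv.swap_mul_self]
    · have hs2sw : s₂.IsSwap := hsw s₂ (by simp)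
      have hs2inv : s₂⁻¹ = s₂ := by
        obtain ⟨c, d, hcd, rfl⟩ := hs2sw; exact Equiv.swap_inv c d
      have hs2sq : s₂ * s₂ = 1 := by
        nth_rewrite 1 [← hs2inv]; exact inv_mul_cancel s₂
      have key : ∃ u' v' : Equiv.Perm β, u'.IsSwap ∧ v'.IsSwap ∧ u' x = x ∧ v' x ≠ x ∧
          Equiv.swap x a * s₂ = u' * v' := by
        by_cases hs2x : s₂ x = x
        · refine ⟨s₂, s₂ * Equiv.swap x a * s₂, hs2sw, ?_, hs2x, ?_, ?_⟩
          · have : s₂ * Equiv.swap x a * s₂ = Equiv.swap (s₂ x) (s₂ a) := by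
              rw [Equiv.swap_apply_apply, hs2inv]
            rw [this]
            exact ⟨s₂ x, s₂ a, fun h => hax (s₂.injective h).symm, rfl⟩
          · have hval : (s₂ * Equiv.swap x a * s₂) x = s₂ a := by
              simp [Equiv.Perm.mul_apply, hs2x, Equiv.swap_apply_left]
            rw [hval]
            intro h
            exact hax (s₂.injective (h.trans hs2x.symm))
          · rw [← mul_assoc, ← mul_assoc, hs2sq, one_mul]
        · obtain ⟨b, hbx, rfl⟩ := isSwap_moving hs2sw hs2x
          have hba : b ≠ a := fun h => h2 (by rw [h])
          refine ⟨Equiv.swap a b, Equiv.swap x a, ⟨a, b, fun h => hba h.symm, rfl⟩,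
            ⟨x, a, fun h => hax h.symm, rfl⟩, ?_, ?_, ?_⟩
          · exact Equiv.swap_apply_of_ne_of_ne (fun h => hax h.symm) (fun h => hbx h.symm)
          · rw [Equiv.swap_apply_left]; exact hax
          · exact swap_id3 (fun h => hax h.symm) (fun h => hbx h.symm) (fun h => hba h.symm)
      obtain ⟨u', v', hu's, hv's, hu'x, hv'x, heq⟩ := key
      have hu'inv : u'⁻¹ = u' := by
        obtain ⟨c, d, hcd, rfl⟩ := hu's; exact Equiv.swap_inv c d
      have hnewfix : (v' :: rest).prod x = x := by
        have hp : (v' :: rest).prod = u'⁻¹ * (Equiv.swap x a :: s₂ :: rest).prod := by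
          simp only [List.prod_cons, ← mul_assoc, heq, hu'inv]
          have hu'sq : u' * u' = 1 := by nth_rewrite 1 [← hu'inv]; exact inv_mul_cancel u'
          rw [hu'sq, one_mul]
        rw [hp, Equiv.Perm.mul_apply, hfix, hu'inv]
        exact hu'x
      obtain ⟨l'', h1, hsw'', h3⟩ := ih (rest.length + 1) (by simp at hlen; omega)
        (v' :: rest) (by simp)
        (fun t ht => by
          rcases List.mem_cons.1 ht with h | h
          · exact h ▸ hv's
          · exact hsw t (by simp [h]))
        hnewfix ⟨v', List.mem_cons_self, hv'x⟩
      refine ⟨u' :: l'', by simp at h1 ⊢; omega, fun t ht => ?_, ?_⟩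
      · rcases List.mem_cons.1 ht with h | h
        · exact h ▸ hu's
        · exact hsw'' t h
      · simp only [List.prod_cons] at h3 ⊢
        rw [h3, ← mul_assoc, ← heq, mul_assoc]

lemma prod_fixes (p : β) : ∀ l : List (Equiv.Perm β), (∀ t ∈ l, t p = p) → l.prod p = p := by
  intro l
  induction l with
  | nil => simp
  | cons t l ih =>
    intro h
    rw [List.prod_cons, Equiv.Perm.mul_apply, ih (fun s hs => h s (by simp [hs])),
      h t (by simp)]

lemma permLength_swap_mul {x y : β} (hxy : x ≠ y) {σ : Equiv.Perm β} (hσ : σ x = x) :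
    permLength (Equiv.swap x y * σ) = permLength σ + 1 := by
  have hub : permLength (Equiv.swap x y * σ) ≤ permLength σ + 1 := by
    obtain ⟨l, hlen, hsw, hprod⟩ := permLength_mem σ
    have h := permLength_le (σ := Equiv.swap x y * σ) (l := Equiv.swap x y :: l)
      (fun t ht => by
        rcases List.mem_cons.1 ht with h | h
        · exact h ▸ ⟨x, y, hxy, rfl⟩
        · exact hsw t h)
      (by rw [List.prod_cons, hprod])
    simpa [hlen] using h
  have hlb : permLength σ + 1 ≤ permLength (Equiv.swap x y * σ) := by
    obtain ⟨l, hlen, hsw, hprod⟩ := permLength_mem (Equiv.swap x y * σ)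
    have hfix : (Equiv.swap x y :: l).prod x = x := by
      rw [List.prod_cons, hprod, ← mul_assoc, Equiv.swap_mul_self, one_mul]
      exact hσ
    obtain ⟨l', h1, h2, h3⟩ := deletion x ((Equiv.swap x y :: l).length)
      (Equiv.swap x y :: l) rfl
      (fun t ht => by
        rcases List.mem_cons.1 ht with h | h
        · exact h ▸ ⟨x, y, hxy, rfl⟩
        · exact hsw t h)
      hfix
      ⟨Equiv.swap x y, List.mem_cons_self, by
        rw [Equiv.swap_apply_left]; exact fun h => hxy h.symm⟩
    have hplen : permLength σ ≤ l'.length := permLength_le h2 (by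
      rw [h3, List.prod_cons, hprod, ← mul_assoc, Equiv.swap_mul_self, one_mul])
    simp only [List.length_cons] at h1
    omega
  omega

end Aux2

/-- an unrepeated Jucys-Murphy transposition increases the length by one. -/
theorem length_increase (n m : ℕ) (α : Fin m → Fin (2*n+1))
    (hα : ∀ i, α i ≠ jmTop n) (k : Fin m)
    (hk : ∀ i, i ≠ k → jmTuple α i ≠ jmTuple α k) :
    permLength (((List.ofFn (jmTuple α)).take (k : ℕ)).prod * jmTuple α k *
        ((List.ofFn (jmTuple α)).drop ((k : ℕ) + 1)).prod) =
      permLength (((List.ofFn (jmTuple α)).take (k : ℕ)).prod *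
        ((List.ofFn (jmTuple α)).drop ((k : ℕ) + 1)).prod) + 1 := by
  classical
  have hne : ∀ i : Fin m, i ≠ k → α i ≠ α k := by
    intro i hik h
    exact hk i hik (by simp [jmTuple, h])
  have hmemtake : ∀ t ∈ (List.ofFn (jmTuple α)).take (k : ℕ), t (α k) = α k := by
    intro t ht
    obtain ⟨j, hj, he⟩ := List.mem_iff_getElem.1 ht
    have hjlt : j < (k : ℕ) := by
      simp only [List.length_take, List.length_ofFn, lt_min_iff] at hj
      exact hj.1
    have hjm : j < m := lt_trans hjlt k.isLt
    have ht2 : t = jmTuple α ⟨j, hjm⟩ := by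
      rw [← he, List.getElem_take, List.getElem_ofFn]
    have hik : (⟨j, hjm⟩ : Fin m) ≠ k := by
      intro h
      rw [Fin.ext_iff] at h
      simp only at h
      omega
    rw [ht2]
    exact Equiv.swap_apply_of_ne_of_ne (Ne.symm (hne _ hik)) (hα k)
  have hmemdrop : ∀ t ∈ (List.ofFn (jmTuple α)).drop ((k : ℕ) + 1), t (α k) = α k := by
    intro t ht
    obtain ⟨j, hj, he⟩ := List.mem_iff_getElem.1 ht
    have hjm : (k : ℕ) + 1 + j < m := by
      simp only [List.length_drop, List.length_ofFn] at hj
      omega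
    have ht2 : t = jmTuple α ⟨(k : ℕ) + 1 + j, hjm⟩ := by
      rw [← he, List.getElem_drop, List.getElem_ofFn]
    have hik : (⟨(k : ℕ) + 1 + j, hjm⟩ : Fin m) ≠ k := by
      intro h
      rw [Fin.ext_iff] at h
      simp only at h
      omega
    rw [ht2]
    exact Equiv.swap_apply_of_ne_of_ne (Ne.symm (hne _ hik)) (hα k)
  set P := ((List.ofFn (jmTuple α)).take (k : ℕ)).prod with hPdef
  set Q := ((List.ofFn (jmTuple α)).drop ((k : ℕ) + 1)).prod with hQdef
  have hPfix : P (α k) = α k := prod_fixes _ _ hmemtake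
  have hQfix : Q (α k) = α k := prod_fixes _ _ hmemdrop
  have hxy : α k ≠ P (jmTop n) := fun h => hα k (P.injective (hPfix.trans h))
  have hσ : (P * Q) (α k) = α k := by
    rw [Equiv.Perm.mul_apply, hQfix, hPfix]
  have hconj : P * jmTuple α k * Q = Equiv.swap (α k) (P (jmTop n)) * (P * Q) := by
    have h1 : Equiv.swap (P (α k)) (P (jmTop n)) = P * Equiv.swap (α k) (jmTop n) * P⁻¹ :=
      Equiv.swap_apply_apply P (α k) (jmTop n)
    rw [hPfix] at h1
    rw [h1]
    show P * jmTuple α k * Q = P * Equiv.swap (α k) (jmTop n) * P⁻¹ * (P * Q)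
    rw [jmTuple]
    group
  rw [hconj]
  exact permLength_swap_mul hxy hσ


end JM
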